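/- arXiv:1209.5028 — 4 statements merged into one kernel-verified Lean document; each statement's English description precedes it below -/
import Mathlib

section
/- Let u: ℝ² → ℝ be smooth with u > 0 and uu_t − u_x² > 0 at a point (t,x). Then the group element with parameters ε₁ = −t, ε₂ = −(x + 2t u_x/u), ε₃ = −(ln u − x u_x/u − t u_x²/u²), ε₄ = ½ ln(u_t/u − u_x²/u²), ε₅ = u_x/u is the unique element of the 5-parameter group (acting as t̃ = e^{2ε₄}(t+ε₁), x̃ = e^{ε₄}(x+ε₂+2ε₅t), ũ = e^{ε₃-ε₅x-ε₅²t}u, prolonged to first derivatives) that maps the first-order jet (t, x, u, u_t, u_x) to the normalized jet (0, 0, 1, 1, 0). -/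
open Real

/-- The prolonged action of the 5-parameter group on first-order jets
`(t, x, u, u_t, u_x)`, with parameters `ε = (ε₁,ε₂,ε₃,ε₄,ε₅)`. -/
noncomputable def jetAct (ε : ℝ × ℝ × ℝ × ℝ × ℝ) (z : ℝ × ℝ × ℝ × ℝ × ℝ) : ℝ × ℝ × ℝ × ℝ × ℝ :=
  let e1 := ε.1; let e2 := ε.2.1; let e3 := ε.2.2.1; let e4 := ε.2.2.2.1
  let e5 := ε.2.2.2.2
  let t := z.1; let x := z.2.1; let u := z.2.2.1; let ut := z.2.2.2.1
  let ux := z.2.2.2.2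
  let μ := e3 - e5*x - e5^2*t
  (exp (2*e4) * (t + e1),
   exp e4 * (x + e2 + 2*e5*t),
   exp μ * u,
   exp (-2*e4 + μ) * (ut - 2*e5*ux + e5^2*u),
   exp (-e4 + μ) * (ux - e5*u))

/-- The moving frame `ε₁ = −t`, `ε₂ = −(x+2tu_x/u)`,
`ε₃ = −(ln u − xu_x/u − tu_x²/u²)`, `ε₄ = ½ ln(u_t/u − u_x²/u²)`, `ε₅ = u_x/u`
is the unique group element mapping the jet `(t,x,u,u_t,u_x)` to the
normalized jet `(0,0,1,1,0)`, provided `u > 0` and `uu_t − u_x² > 0`. -/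
theorem moving_frame_unique (t x u ut ux : ℝ) (hu : 0 < u)
    (hd : 0 < u * ut - ux^2) :
    jetAct (-t, -(x + 2*t*ux/u), -(Real.log u - x*ux/u - t*ux^2/u^2),
        (1/2) * Real.log (ut/u - ux^2/u^2), ux/u) (t, x, u, ut, ux)
      = (0, 0, 1, 1, 0)
    ∧ ∀ ε : ℝ × ℝ × ℝ × ℝ × ℝ,
        jetAct ε (t, x, u, ut, ux) = (0, 0, 1, 1, 0) →
        ε = (-t, -(x + 2*t*ux/u), -(Real.log u - x*ux/u - t*ux^2/u^2),
          (1/2) * Real.log (ut/u - ux^2/u^2), ux/u) := by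
  have hu' : u ≠ 0 := hu.ne'
  have hDeq : ut/u - ux^2/u^2 = (u * ut - ux^2)/u^2 := by field_simp
  have hD : 0 < ut/u - ux^2/u^2 := by rw [hDeq]; positivity
  constructor
  · simp only [jetAct, Prod.mk.injEq]
    have hμ : (-(Real.log u - x*ux/u - t*ux^2/u^2)) - (ux/u)*x - (ux/u)^2*t
        = -Real.log u := by field_simp; ring
    refine ⟨by ring_nf, ?_, ?_, ?_, ?_⟩
    · have : x + -(x + 2*t*ux/u) + 2*(ux/u)*t = 0 := by field_simp; ring
      rw [this, mul_zero]
    · rw [hμ, exp_neg, exp_log hu]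
      field_simp
    · rw [hμ]
      have h2 : -2*((1/2) * Real.log (ut/u - ux^2/u^2)) + -Real.log u
          = -(Real.log (ut/u - ux^2/u^2) + Real.log u) := by ring
      rw [h2, exp_neg, exp_add, exp_log hD, exp_log hu]
      have h3 : ut - 2*(ux/u)*ux + (ux/u)^2*u = (ut/u - ux^2/u^2) * u := by
        field_simp; ring
      rw [h3]
      have hx : (0:ℝ) < ut*u^2 - u*ux^2 := by nlinarith
      have hx' := hx.ne'
      field_simp
      exact div_self (by nlinarith : (0:ℝ) < ut*u - ux^2).ne'
    · have : ux - (ux/u)*u = 0 := by field_simp; ring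
      rw [this, mul_zero]
  · rintro ⟨e1, e2, e3, e4, e5⟩ h
    simp only [jetAct, Prod.mk.injEq] at h
    obtain ⟨h1, h2, h3, h4, h5⟩ := h
    have he5 : e5 = ux/u := by
      have := mul_eq_zero.mp h5
      rcases this with h | h
      · exact absurd h (exp_ne_zero _)
      · field_simp
        linarith [sub_eq_zero.mp h]
    subst he5
    -- μ = -log u
    have hμexp : exp (e3 - (ux/u)*x - (ux/u)^2*t) = 1/u := by
      field_simp at h3 ⊢
      linarith [h3]
    have hμ : e3 - (ux/u)*x - (ux/u)^2*t = -Real.log u := by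
      have := congrArg Real.log hμexp
      rwa [Real.log_exp, one_div, Real.log_inv] at this
    have he3 : e3 = -(Real.log u - x*ux/u - t*ux^2/u^2) := by
      have : e3 = -Real.log u + (ux/u)*x + (ux/u)^2*t := by linarith
      rw [this]; field_simp; ring
    -- e4
    have hq : ut - 2*(ux/u)*ux + (ux/u)^2*u = (ut/u - ux^2/u^2) * u := by
      field_simp; ring
    have he4exp : exp (2*e4) = ut/u - ux^2/u^2 := by
      rw [hq, hμ] at h4
      have hrw : -2*e4 + -Real.log u = -(2*e4 + Real.log u) := by ring
      rw [hrw, exp_neg, exp_add, exp_log hu] at h4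
      have hne : exp (2*e4) * u ≠ 0 := by positivity
      rw [inv_mul_eq_one₀ hne] at h4
      exact mul_right_cancel₀ hu' h4
    have he4 : e4 = (1/2) * Real.log (ut/u - ux^2/u^2) := by
      have := congrArg Real.log he4exp
      rw [Real.log_exp] at this
      linarith
    -- e1
    have he1 : e1 = -t := by
      rcases mul_eq_zero.mp h1 with h | h
      · exact absurd h (exp_ne_zero _)
      · linarith [h]
    -- e2
    have he2 : e2 = -(x + 2*t*ux/u) := by
      rcases mul_eq_zero.mp h2 with h | h
      · exact absurd h (exp_ne_zero _)
      · field_simp at h ⊢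
        linarith
    simp [he1, he2, he3, he4]
end

section
/- On the first jet space with u > 0 and uu_t − u_x² > 0, the invariantization of u_{xx} under the moving frame ε₁=−t, ε₂=−(x+2tu_x/u), ε₃=−(ln u − xu_x/u − tu_x²/u²), ε₄=½ln(u_t/u − u_x²/u²), ε₅=u_x/u, applied to the second-order prolonged action ũ_{x̃x̃} = e^{−2ε₄+ε₃−ε₅x−ε₅²t}(u_{xx} − 2ε₅u_x + ε₅²u), equals (u u_{xx} − u_x²)/(u u_t − u_x²). -/
open Real

/-- Invariantization of `u_{xx}`: substituting the moving frame
`ε₃ = −(ln u − xu_x/u − tu_x²/u²)`, `ε₄ = ½ ln(u_t/u − u_x²/u²)`, `ε₅ = u_x/u`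
into the prolonged action
`ũ_{x̃x̃} = e^{−2ε₄+ε₃−ε₅x−ε₅²t}(u_{xx} − 2ε₅u_x + ε₅²u)` yields
`(uu_{xx} − u_x²)/(uu_t − u_x²)`. -/
theorem invariantization_of_uxx (t x u ut ux uxx : ℝ) (hu : 0 < u)
    (hd : 0 < u * ut - ux^2) :
    exp (-2*((1/2) * Real.log (ut/u - ux^2/u^2))
        + (-(Real.log u - x*ux/u - t*ux^2/u^2))
        - (ux/u)*x - (ux/u)^2*t)
      * (uxx - 2*(ux/u)*ux + (ux/u)^2*u)
    = (u*uxx - ux^2) / (u*ut - ux^2) := by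
  have hu0 : u ≠ 0 := ne_of_gt hu
  have hq : ut/u - ux^2/u^2 = (u*ut - ux^2)/u^2 := by field_simp
  have hqpos : 0 < ut/u - ux^2/u^2 := by
    rw [hq]; positivity
  have hE : (-2*((1/2) * Real.log (ut/u - ux^2/u^2))
        + (-(Real.log u - x*ux/u - t*ux^2/u^2))
        - (ux/u)*x - (ux/u)^2*t)
      = Real.log (u / (u*ut - ux^2)) := by
    rw [hq, Real.log_div hu0 (ne_of_gt hd), Real.log_div (ne_of_gt hd) (by positivity),
      Real.log_pow]
    push_cast
    field_simp
    ring
  rw [hE, Real.exp_log (by positivity)]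
  field_simp
  ring
end

section
/- The function I(t,x,u,u_t,u_x,u_{xx}) = (u u_{xx} − u_x²)/(u u_t − u_x²), defined on the domain u > 0, uu_t − u_x² > 0, is invariant under the prolonged action of the 5-parameter group: substituting the transformed jet coordinates (t̃, x̃, ũ, ũ_{t̃}, ũ_{x̃}, ũ_{x̃x̃}) gives the same value as the original jet coordinates, for all parameter values (ε₁,…,ε₅). -/
open Real

/-- The function `I = (uu_{xx} − u_x²)/(uu_t − u_x²)` is invariant under the
prolonged action of the 5-parameter group on second-order jets: substituting
the transformed jet coordinates gives the same value, for all parameters. -/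
theorem differential_invariant_heat (ε₁ ε₂ ε₃ ε₄ ε₅ : ℝ)
    (t x u ut ux uxx : ℝ) (hu : 0 < u) (hd : 0 < u * ut - ux^2) :
    ((exp (ε₃ - ε₅*x - ε₅^2*t) * u)
        * (exp (-2*ε₄ + (ε₃ - ε₅*x - ε₅^2*t)) * (uxx - 2*ε₅*ux + ε₅^2*u))
      - (exp (-ε₄ + (ε₃ - ε₅*x - ε₅^2*t)) * (ux - ε₅*u))^2)
    / ((exp (ε₃ - ε₅*x - ε₅^2*t) * u)
        * (exp (-2*ε₄ + (ε₃ - ε₅*x - ε₅^2*t)) * (ut - 2*ε₅*ux + ε₅^2*u))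
      - (exp (-ε₄ + (ε₃ - ε₅*x - ε₅^2*t)) * (ux - ε₅*u))^2)
    = (u*uxx - ux^2) / (u*ut - ux^2) := by
  have key : exp (ε₃ - ε₅*x - ε₅^2*t) * exp (-2*ε₄ + (ε₃ - ε₅*x - ε₅^2*t))
      = exp (-ε₄ + (ε₃ - ε₅*x - ε₅^2*t)) ^ 2 := by
    rw [← exp_add, ← Real.exp_nat_mul]; congr 1; push_cast; ring
  have hden : (exp (ε₃ - ε₅*x - ε₅^2*t) * u)
        * (exp (-2*ε₄ + (ε₃ - ε₅*x - ε₅^2*t)) * (ut - 2*ε₅*ux + ε₅^2*u))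
      - (exp (-ε₄ + (ε₃ - ε₅*x - ε₅^2*t)) * (ux - ε₅*u))^2
      = exp (-ε₄ + (ε₃ - ε₅*x - ε₅^2*t)) ^ 2 * (u*ut - ux^2) := by
    linear_combination (u*(ut - 2*ε₅*ux + ε₅^2*u))*key
  rw [div_eq_div_iff (by rw [hden]; positivity) (ne_of_gt hd)]
  linear_combination (u*(uxx - 2*ε₅*ux + ε₅^2*u)*(u*ut - ux^2)
    - (u*uxx - ux^2)*u*(ut - 2*ε₅*ux + ε₅^2*u)) * key
end

section
/- Let u: ℝ → ℝ be C⁴ and positive. With h⁺ = h⁻ = h, ε₅ = (ln u(x+h) − ln u(x−h))/(2h), the invariantized second-difference D(h) = (1/h²)[e^{−ε₅h}u(x+h) + e^{ε₅h}u(x−h) − 2u(x)] satisfies D(h) = u''(x) − u'(x)²/u(x) + O(h²) as h → 0. -/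
open Real Set

private lemma iterWithin_eq {f : ℝ → ℝ} (hf : ContDiff ℝ 4 f)
    {s : Set ℝ} (hs : UniqueDiffOn ℝ s) :
    ∀ k : ℕ, k ≤ 4 → ∀ y ∈ s, iteratedDerivWithin k f s y = iteratedDeriv k f y := by
  intro k
  induction k with
  | zero => intro _ y _; simp [iteratedDerivWithin_zero, iteratedDeriv_zero]
  | succ k ih =>
    intro hk y hy
    have hk' : k < 4 := Nat.lt_of_succ_le hk
    have heq : Set.EqOn (iteratedDerivWithin k f s) (iteratedDeriv k f) s :=
      fun z hz => ih (le_of_lt hk') z hz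
    rw [iteratedDerivWithin_succ, derivWithin_congr heq (heq hy),
      (hf.differentiable_iteratedDeriv k (by exact_mod_cast hk') y).derivWithin (hs y hy),
      iteratedDeriv_succ]

private noncomputable def Fa (u : ℝ → ℝ) (x t : ℝ) : ℝ :=
  Real.exp ((Real.log (u (x + t)) + Real.log (u (x - t))) / 2)

private lemma Fa_contDiff {u : ℝ → ℝ} (hu : ContDiff ℝ 4 u) (hpos : ∀ y, 0 < u y) (x : ℝ) :
    ContDiff ℝ 4 (Fa u x) := by
  have hg : ContDiff ℝ 4 (fun y => Real.log (u y)) := by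
    rw [contDiff_iff_contDiffAt]
    intro y
    exact (Real.contDiffAt_log.mpr (hpos y).ne').comp y hu.contDiffAt
  exact (Real.contDiff_exp.of_le le_top).comp
    (((hg.comp (contDiff_const.add contDiff_id)).add
      (hg.comp (contDiff_const.sub contDiff_id))).div_const 2)

private lemma Fa_even (u : ℝ → ℝ) (x t : ℝ) : Fa u x (-t) = Fa u x t := by
  unfold Fa
  rw [show x + -t = x - t by ring, show x - -t = x + t by ring, add_comm]

private lemma Fa_zero {u : ℝ → ℝ} (hpos : ∀ y, 0 < u y) (x : ℝ) : Fa u x 0 = u x := by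
  unfold Fa
  rw [add_zero, sub_zero, show (Real.log (u x) + Real.log (u x)) / 2 = Real.log (u x) by ring,
    Real.exp_log (hpos x)]

private lemma Fa_odd_deriv (u : ℝ → ℝ) (x : ℝ) {n : ℕ} (hn : Odd n) :
    iteratedDeriv n (Fa u x) 0 = 0 := by
  have h1 : (fun t => Fa u x (-t)) = Fa u x := funext (Fa_even u x)
  have := iteratedDeriv_comp_neg n (Fa u x) 0
  rw [h1, neg_zero, hn.neg_one_pow, smul_eq_mul] at this
  linarith

private lemma Fa_hasDeriv {u : ℝ → ℝ} (hu : ContDiff ℝ 4 u) (hpos : ∀ y, 0 < u y) (x t : ℝ) :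
    HasDerivAt (Fa u x)
      ((deriv u (x + t) / u (x + t) - deriv u (x - t) / u (x - t)) / 2 * Fa u x t) t := by
  have hu' : ∀ y, HasDerivAt u (deriv u y) y := fun y =>
    ((hu.differentiable (by norm_num)) y).hasDerivAt
  have h1 : HasDerivAt (fun s : ℝ => x + s) 1 t := by
    simpa using (hasDerivAt_id t).const_add x
  have h2 : HasDerivAt (fun s : ℝ => x - s) (-1) t := by
    simpa using (hasDerivAt_id t).const_sub x
  have h3 : HasDerivAt (fun s => u (x + s)) (deriv u (x + t) * 1) t :=
    (hu' (x + t)).comp t h1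
  have h4 : HasDerivAt (fun s => u (x - s)) (deriv u (x - t) * (-1)) t :=
    (hu' (x - t)).comp t h2
  have h5 := h3.log (hpos (x + t)).ne'
  have h6 := h4.log (hpos (x - t)).ne'
  have h7 := ((h5.add h6).div_const 2).exp
  convert h7 using 1 <;> unfold Fa <;> simp only [Pi.add_apply] <;> ring

private lemma Fa_second {u : ℝ → ℝ} (hu : ContDiff ℝ 4 u) (hpos : ∀ y, 0 < u y) (x : ℝ) :
    iteratedDeriv 2 (Fa u x) 0 = deriv (deriv u) x - (deriv u x) ^ 2 / u x := by
  have hu' : ∀ y, HasDerivAt u (deriv u y) y := fun y =>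
    ((hu.differentiable (by norm_num)) y).hasDerivAt
  have hu3 : ContDiff ℝ 3 (deriv u) := by
    have h4 : ContDiff ℝ ((3 : WithTop ℕ∞) + 1) u := hu.of_le (by norm_num)
    exact (contDiff_succ_iff_deriv.mp h4).2.2
  have hdu : ∀ y, HasDerivAt (deriv u) (deriv (deriv u) x) y → True := fun _ _ => trivial
  have hdux : HasDerivAt (deriv u) (deriv (deriv u) x) x :=
    ((hu3.differentiable (by norm_num)) x).hasDerivAt
  -- derivative of the coefficient b at 0
  have h1 : HasDerivAt (fun s : ℝ => x + s) 1 0 := by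
    simpa using (hasDerivAt_id (0:ℝ)).const_add x
  have h2 : HasDerivAt (fun s : ℝ => x - s) (-1) 0 := by
    simpa using (hasDerivAt_id (0:ℝ)).const_sub x
  have hdux' : HasDerivAt (deriv u) (deriv (deriv u) x) (x + 0) := by simpa using hdux
  have hdux'' : HasDerivAt (deriv u) (deriv (deriv u) x) (x - 0) := by simpa using hdux
  have hux' : HasDerivAt u (deriv u (x + 0)) (x + 0) := hu' (x + 0)
  have hux'' : HasDerivAt u (deriv u (x - 0)) (x - 0) := hu' (x - 0)
  have h5 : HasDerivAt (fun s => deriv u (x + s)) (deriv (deriv u) x * 1) 0 := hdux'.comp 0 h1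
  have h6 : HasDerivAt (fun s => deriv u (x - s)) (deriv (deriv u) x * (-1)) 0 := hdux''.comp 0 h2
  have h3 : HasDerivAt (fun s => u (x + s)) (deriv u (x + 0) * 1) 0 := hux'.comp 0 h1
  have h4 : HasDerivAt (fun s => u (x - s)) (deriv u (x - 0) * (-1)) 0 := hux''.comp 0 h2
  have hq1 := h5.div h3 (hpos (x + 0)).ne'
  have hq2 := h6.div h4 (hpos (x - 0)).ne'
  have hb := (hq1.sub hq2).div_const 2
  have hmul := hb.mul (Fa_hasDeriv hu hpos x 0)
  have hderivF : deriv (Fa u x) =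
      fun t => (deriv u (x + t) / u (x + t) - deriv u (x - t) / u (x - t)) / 2 * Fa u x t :=
    funext fun t => (Fa_hasDeriv hu hpos x t).deriv
  rw [show (2 : ℕ) = 1 + 1 from rfl, iteratedDeriv_succ, iteratedDeriv_one, hderivF, (show HasDerivAt
    (fun t => (deriv u (x + t) / u (x + t) - deriv u (x - t) / u (x - t)) / 2 * Fa u x t) _ 0
    from hmul).deriv]
  rw [Fa_zero hpos x]
  have hux0 : u x ≠ 0 := (hpos x).ne'
  rw [add_zero, sub_zero]
  simp only [Pi.div_apply, Pi.sub_apply, add_zero, sub_zero]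
  field_simp
  ring

/-- Second-order accuracy of the invariantized second difference: if `u` is
`C⁴` and positive, and `ε₅(h) = (ln u(x+h) − ln u(x−h))/(2h)`, then
`D(h) = (1/h²)[e^{−ε₅h}u(x+h) + e^{ε₅h}u(x−h) − 2u(x)]`
satisfies `D(h) = u''(x) − u'(x)²/u(x) + O(h²)` as `h → 0`. -/
theorem invariantized_second_difference_second_order (u : ℝ → ℝ)
    (hu : ContDiff ℝ 4 u) (hpos : ∀ y, 0 < u y) (x : ℝ) :
    ∃ C h₀ : ℝ, 0 < C ∧ 0 < h₀ ∧ ∀ h : ℝ, 0 < h → h < h₀ →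
      |(1/h^2) * (exp (-((Real.log (u (x + h)) - Real.log (u (x - h))) / (2*h)) * h)
            * u (x + h)
          + exp (((Real.log (u (x + h)) - Real.log (u (x - h))) / (2*h)) * h)
            * u (x - h)
          - 2 * u x)
        - (deriv (deriv u) x - (deriv u x)^2 / u x)| ≤ C * h^2 := by
  have hF : ContDiff ℝ 4 (Fa u x) := Fa_contDiff hu hpos x
  obtain ⟨M, hM⟩ := (isCompact_Icc (a := (0:ℝ)) (b := 1)).exists_bound_of_continuousOn
    ((hF.continuous_iteratedDeriv 4 le_rfl).continuousOn)
  have hM0 : 0 ≤ M := le_trans (norm_nonneg _) (hM 0 (by norm_num))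
  refine ⟨M / 12 + 1, 1, by positivity, one_pos, ?_⟩
  intro h hh0 hh1
  have hne : h ≠ 0 := ne_of_gt hh0
  have hE : exp (-((Real.log (u (x + h)) - Real.log (u (x - h))) / (2*h)) * h) * u (x + h)
      + exp (((Real.log (u (x + h)) - Real.log (u (x - h))) / (2*h)) * h) * u (x - h)
      - 2 * u x = 2 * (Fa u x h - u x) := by
    unfold Fa
    set L1 := Real.log (u (x + h)) with hL1
    set L2 := Real.log (u (x - h)) with hL2
    rw [← Real.exp_log (hpos (x + h)), ← Real.exp_log (hpos (x - h)), ← hL1, ← hL2,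
      ← Real.exp_add, ← Real.exp_add,
      show -((L1 - L2) / (2*h)) * h + L1 = (L1 + L2)/2 by field_simp; ring,
      show (L1 - L2) / (2*h) * h + L2 = (L1 + L2)/2 by field_simp; ring]
    ring
  have hud := uniqueDiffOn_Icc hh0
  have hcdOn : ContDiffOn ℝ 3 (Fa u x) (Icc 0 h) := (hF.of_le (by norm_num)).contDiffOn
  have hdiffOn : DifferentiableOn ℝ (iteratedDerivWithin 3 (Fa u x) (Icc 0 h)) (Ioo 0 h) :=
    ((hF.differentiable_iteratedDeriv 3 (by norm_num)).differentiableOn).congr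
      (fun y hy => iterWithin_eq hF hud 3 (by norm_num) y (Ioo_subset_Icc_self hy))
  obtain ⟨ξ, hξ, hTay⟩ := taylor_mean_remainder_lagrange hh0.ne
    (by rwa [uIcc_of_le hh0.le]) (by rwa [uIcc_of_le hh0.le, uIoo_of_le hh0.le])
  rw [uIcc_of_le hh0.le] at hTay
  rw [uIoo_of_le hh0.le] at hξ
  have e0 : (0:ℝ) ∈ Icc (0:ℝ) h := left_mem_Icc.mpr hh0.le
  rw [taylor_within_apply] at hTay
  simp only [Finset.sum_range_succ, Finset.sum_range_zero] at hTay
  norm_num [Nat.factorial] at hTay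
  rw [← iteratedDerivWithin_one] at hTay
  rw [iterWithin_eq hF hud 1 (by norm_num) 0 e0,
    iterWithin_eq hF hud 2 (by norm_num) 0 e0, iterWithin_eq hF hud 3 (by norm_num) 0 e0,
    iterWithin_eq hF hud 4 le_rfl ξ (Ioo_subset_Icc_self hξ)] at hTay
  rw [Fa_odd_deriv u x (⟨0, by norm_num⟩ : Odd 1), Fa_odd_deriv u x (⟨1, by norm_num⟩ : Odd 3),
    Fa_second hu hpos x, Fa_zero hpos x] at hTay
  rw [hE]
  have hstep : 1 / h ^ 2 * (2 * (Fa u x h - u x)) -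
      (deriv (deriv u) x - deriv u x ^ 2 / u x) =
      iteratedDeriv 4 (Fa u x) ξ * h ^ 2 / 12 := by
    have hFh : Fa u x h - u x = iteratedDeriv 4 (Fa u x) ξ * h ^ 4 / 24
        + 1 / 2 * h ^ 2 * (deriv (deriv u) x - deriv u x ^ 2 / u x) := by linarith
    rw [hFh]
    field_simp
    ring
  rw [hstep]
  have hRb : |iteratedDeriv 4 (Fa u x) ξ| ≤ M := by
    have := hM ξ ⟨hξ.1.le, le_of_lt (lt_trans hξ.2 hh1)⟩
    simpa [Real.norm_eq_abs] using this
  rw [abs_div, abs_mul, abs_pow, abs_of_pos hh0]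
  rw [show |(12:ℝ)| = 12 by norm_num]
  rw [div_le_iff₀ (by norm_num : (0:ℝ) < 12)] -- maybe not; do nlinarith instead
  nlinarith [abs_nonneg (iteratedDeriv 4 (Fa u x) ξ), sq_nonneg h, hh0.le]
end
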